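/- Let S be a finite collection of pairwise disjoint chains and let ~ be the smallest equivalence relation on S under which any two linked chains are equivalent. If C, C′, D ∈ S with C ~ C′, and there are entries x ∈ C, y ∈ C′ and z ∈ D with x > z > y, then D ~ C. Consequently, when all entries of S are listed in decreasing order, the entries belonging to the chains of any single equivalence class occupy a set of consecutive positions. -/

import Mathlib

/-- The maximum entry of a finite set of integers (`0` for the empty set). -/
def fmax (C : Finset ℤ) : ℤ := WithBot.unbotD 0 C.max

/-- The minimum entry of a finite set of integers (`0` for the empty set). -/
def fmin (C : Finset ℤ) : ℤ := WithTop.untopD 0 C.min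

/-- A *chain* is a nonempty set of integers of the form `{c, c-2, …, c-2k}`. -/
def IsChainSet (C : Finset ℤ) : Prop :=
  ∃ (c : ℤ) (k : ℕ), C = (Finset.range (k + 1)).image (fun i : ℕ => c - 2 * (i : ℤ))

/-- Two chains with disjoint entries, with maxima `A, B` and minima `a, b`, are *linked*
if `A > B > a` or `B > A > b`. -/
def LinkedChains (C D : Finset ℤ) : Prop :=
  Disjoint C D ∧
    ((fmax D < fmax C ∧ fmin C < fmax D) ∨ (fmax C < fmax D ∧ fmin D < fmax C))

/-- The set of all entries of a collection of chains. -/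
def entriesOf (S : Finset (Finset ℤ)) : Finset ℤ := S.biUnion id

/-- A finite collection of pairwise disjoint chains. -/
def IsChainCollection (S : Finset (Finset ℤ)) : Prop :=
  (∀ C ∈ S, IsChainSet C) ∧ ∀ C ∈ S, ∀ D ∈ S, C ≠ D → Disjoint C D

/-- A collection of pairwise disjoint chains is *interlaced* if any two of its chains are
joined by a finite sequence of chains of the collection in which consecutive chains are
linked. -/
def Interlaced (S : Finset (Finset ℤ)) : Prop :=
  ∀ C ∈ S, ∀ D ∈ S,
    Relation.ReflTransGen (fun X Y => X ∈ S ∧ Y ∈ S ∧ LinkedChains X Y) C D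

/-- An *admissible configuration of size `n`*: an interlaced collection of pairwise disjoint
chains of positive integers with `n` entries in total and smallest entry equal to `1`. -/
def AdmissibleConfig (n : ℕ) (S : Finset (Finset ℤ)) : Prop :=
  IsChainCollection S ∧ Interlaced S ∧ (entriesOf S).card = n ∧
    (∀ x ∈ entriesOf S, 0 < x) ∧ (1 : ℤ) ∈ entriesOf S

/-- The relation on a collection `S` generated by linkage: `C` and `D` are related when both
belong to `S` and are linked.  Its equivalence closure `Relation.EqvGen (linkRel S)` is the
smallest equivalence relation under which any two linked chains of `S` are equivalent. -/
def linkRel (S : Finset (Finset ℤ)) : Finset ℤ → Finset ℤ → Prop :=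
  fun X Y => X ∈ S ∧ Y ∈ S ∧ LinkedChains X Y

lemma chain_nonempty {C : Finset ℤ} (h : IsChainSet C) : C.Nonempty := by
  obtain ⟨c, k, rfl⟩ := h
  exact Finset.nonempty_range_add_one.image _

lemma fmax_mem {C : Finset ℤ} (h : C.Nonempty) : fmax C ∈ C := by
  obtain ⟨m, hm⟩ := Finset.max_of_nonempty h
  simpa [fmax, hm] using Finset.mem_of_max hm

lemma fmin_mem {C : Finset ℤ} (h : C.Nonempty) : fmin C ∈ C := by
  obtain ⟨m, hm⟩ := Finset.min_of_nonempty h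
  simpa [fmin, hm] using Finset.mem_of_min hm

lemma le_fmax {C : Finset ℤ} {x : ℤ} (hx : x ∈ C) : x ≤ fmax C := by
  obtain ⟨m, hm⟩ := Finset.max_of_mem hx
  have := Finset.le_max_of_eq hx hm
  simpa [fmax, hm]

lemma fmin_le {C : Finset ℤ} {x : ℤ} (hx : x ∈ C) : fmin C ≤ x := by
  obtain ⟨m, hm⟩ := Finset.min_of_mem hx
  have := Finset.min_le_of_eq hx hm
  simpa [fmin, hm]

lemma linkRel_symm {S : Finset (Finset ℤ)} {X Y : Finset ℤ} (h : linkRel S X Y) :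
    linkRel S Y X := ⟨h.2.1, h.1, h.2.2.1.symm, h.2.2.2.symm⟩

lemma eqvGen_to_rtg {S : Finset (Finset ℤ)} {X Y : Finset ℤ}
    (h : Relation.EqvGen (linkRel S) X Y) :
    Relation.ReflTransGen (linkRel S) X Y := by
  induction h with
  | rel a b h => exact Relation.ReflTransGen.single h
  | refl a => exact Relation.ReflTransGen.refl
  | symm a b h ih =>
    haveI : Std.Symm (linkRel S) := ⟨fun _ _ hr => linkRel_symm hr⟩
    exact Relation.ReflTransGen.symmetric.symm _ _ ih
  | trans a b c _ _ ih1 ih2 => exact ih1.trans ih2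

lemma rtg_to_eqvGen {S : Finset (Finset ℤ)} {X Y : Finset ℤ}
    (h : Relation.ReflTransGen (linkRel S) X Y) :
    Relation.EqvGen (linkRel S) X Y := by
  induction h with
  | refl => exact Relation.EqvGen.refl _
  | tail _ h ih => exact Relation.EqvGen.trans _ _ _ ih (Relation.EqvGen.rel _ _ h)

lemma reach_interval {S : Finset (Finset ℤ)} {z : ℤ} :
    ∀ {C C' : Finset ℤ}, Relation.ReflTransGen (linkRel S) C C' → C ∈ S →
      fmin C' < z → z < fmax C →
      ∃ E, Relation.ReflTransGen (linkRel S) C E ∧ E ∈ S ∧ fmin E ≤ z ∧ z ≤ fmax E := by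
  intro C C' h
  induction h using Relation.ReflTransGen.head_induction_on with
  | refl =>
    intro hC hz1 hz2
    exact ⟨C', Relation.ReflTransGen.refl, hC, hz1.le, hz2.le⟩
  | @head a b hab hbc ih =>
    intro hC hz1 hz2
    obtain ⟨haS, hbS, hd, hlink⟩ := hab
    by_cases hzb : z < fmax b
    · obtain ⟨E, hE, hES, h1, h2⟩ := ih hbS hz1 hzb
      exact ⟨E, Relation.ReflTransGen.head ⟨haS, hbS, hd, hlink⟩ hE, hES, h1, h2⟩
    · push_neg at hzb
      rcases hlink with ⟨h1, h2⟩ | ⟨h1, h2⟩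
      · exact ⟨_, Relation.ReflTransGen.refl, haS, (h2.trans_le hzb).le, hz2.le⟩
      · exact absurd hzb (not_le.mpr (by linarith))

lemma part1 {S : Finset (Finset ℤ)} (hS : IsChainCollection S) {C C' D : Finset ℤ}
    (hC : C ∈ S) (hD : D ∈ S)
    (hcc : Relation.EqvGen (linkRel S) C C')
    {x y z : ℤ} (hx : x ∈ C) (hy : y ∈ C') (hz : z ∈ D) (h1 : y < z) (h2 : z < x) :
    Relation.EqvGen (linkRel S) D C := by
  have hz1 : fmin C' < z := lt_of_le_of_lt (fmin_le hy) h1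
  have hz2 : z < fmax C := lt_of_lt_of_le h2 (le_fmax hx)
  obtain ⟨E, hCE, hES, hEz1, hEz2⟩ := reach_interval (eqvGen_to_rtg hcc) hC hz1 hz2
  by_cases hDE : D = E
  · subst hDE
    exact Relation.EqvGen.symm _ _ (rtg_to_eqvGen hCE)
  · have hdis := hS.2 D hD E hES hDE
    have hzE : z ∉ E := fun h => Finset.disjoint_left.mp hdis hz h
    have hEne : E.Nonempty := chain_nonempty (hS.1 E hES)
    have hDne : D.Nonempty := ⟨z, hz⟩
    have h1' : fmin E < z :=
      lt_of_le_of_ne hEz1 (fun h => hzE (h ▸ fmin_mem hEne))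
    have h2' : z < fmax E :=
      lt_of_le_of_ne hEz2 (fun h => hzE (h ▸ fmax_mem hEne))
    have hne : fmax D ≠ fmax E := fun h =>
      Finset.disjoint_left.mp hdis (fmax_mem hDne) (h ▸ fmax_mem hEne)
    have hlink : LinkedChains D E := by
      refine ⟨hdis, ?_⟩
      rcases lt_or_gt_of_ne hne with h | h
      · exact Or.inr ⟨h, lt_of_lt_of_le h1' (le_fmax hz)⟩
      · exact Or.inl ⟨h, lt_of_le_of_lt (fmin_le hz) h2'⟩
    exact Relation.EqvGen.trans _ _ _
      (Relation.EqvGen.rel _ _ ⟨hD, hES, hlink⟩)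
      (Relation.EqvGen.symm _ _ (rtg_to_eqvGen hCE))

/-- From the proof of Proposition 3.1.  If `C ~ C'` under the linkage equivalence, and some
chain `D` of `S` has an entry `z` strictly between an entry `y` of `C'` and an entry `x` of
`C`, then `D ~ C`.  Consequently, the entries of the chains of any single equivalence class
occupy a set of consecutive positions in the decreasing listing of all entries: the class
entries form an order-convex subset of the set of all entries. -/
theorem linkage_class_consecutive (S : Finset (Finset ℤ)) (hS : IsChainCollection S) :
    (∀ C ∈ S, ∀ C' ∈ S, ∀ D ∈ S,
        Relation.EqvGen (linkRel S) C C' →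
        ∀ x ∈ C, ∀ y ∈ C', ∀ z ∈ D, y < z → z < x →
          Relation.EqvGen (linkRel S) D C) ∧
    (∀ C₀ ∈ S, ∀ x y z : ℤ,
        (∃ Cx ∈ S, Relation.EqvGen (linkRel S) C₀ Cx ∧ x ∈ Cx) →
        (∃ Cy ∈ S, Relation.EqvGen (linkRel S) C₀ Cy ∧ y ∈ Cy) →
        z ∈ entriesOf S → y < z → z < x →
          (∃ Cz ∈ S, Relation.EqvGen (linkRel S) C₀ Cz ∧ z ∈ Cz)) := by
  constructor
  · intro C hC C' _ D hD hcc x hx y hy z hz h1 h2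
    exact part1 hS hC hD hcc hx hy hz h1 h2
  · rintro C₀ hC₀ x y z ⟨Cx, hCxS, hx1, hx2⟩ ⟨Cy, hCyS, hy1, hy2⟩ hzmem h1 h2
    obtain ⟨D, hDS, hzD⟩ := Finset.mem_biUnion.mp hzmem
    have hcc : Relation.EqvGen (linkRel S) Cx Cy :=
      Relation.EqvGen.trans _ _ _ (Relation.EqvGen.symm _ _ hx1) hy1
    have hDC : Relation.EqvGen (linkRel S) D Cx :=
      part1 hS hCxS hDS hcc hx2 hy2 hzD h1 h2
    exact ⟨D, hDS, Relation.EqvGen.trans _ _ _ hx1 (Relation.EqvGen.symm _ _ hDC), hzD⟩
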